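/- If an equilateral hyperbolic triangle in the hyperbolic plane has side length r with 0 < r ≤ 1, then each of its internal angles θ satisfies 2π/7 < θ < π/3. -/

import Mathlib

open Real

lemma tanh_eq_aux (t : ℝ) : tanh t = (exp (2*t) - 1) / (exp (2*t) + 1) := by
  rw [Real.tanh_eq_sinh_div_cosh, Real.sinh_eq, Real.cosh_eq]
  have h1 : exp t > 0 := exp_pos t
  have h2 : exp (-t) > 0 := exp_pos (-t)
  have h3 : exp (2*t) = exp t * exp t := by rw [two_mul, exp_add]
  have h4 : exp (-t) = 1 / exp t := by rw [exp_neg]; field_simp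
  rw [h3, h4]
  field_simp

lemma tanh_half_bound : 0 < tanh (1/2) ∧ tanh (1/2) ≤ 0.4621172 := by
  rw [tanh_eq_aux]
  norm_num
  have he1 : (1:ℝ) < exp 1 := by
    have := Real.exp_one_gt_d9; linarith
  have he2 : exp 1 < 2.7182818286 := Real.exp_one_lt_d9
  constructor
  · positivity
  · rw [div_le_iff₀ (by linarith)]
    nlinarith

lemma sin_pi_div_seven_lt : sin (π/7) ≤ 0.43695 := by
  have hpi : π < 3.15 := by have := Real.pi_lt_d2; linarith
  have hpi2 : 3.14 < π := by have := Real.pi_gt_d2; linarith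
  have h1 : π/7 ≤ 0.45 := by linarith
  have h2 : sin (π/7) ≤ sin 0.45 := by
    apply Real.sin_le_sin_of_le_of_le_pi_div_two _ _ h1
    · linarith
    · linarith
  have h3 : |sin 0.45 - (0.45 - 0.45^3/6)| ≤ |(0.45:ℝ)|^4 * (5/96) :=
    le_trans (Real.sin_bound (by rw [abs_of_pos] <;> norm_num))
      (by rw [abs_of_pos (by norm_num : (0:ℝ) < 0.45)]; norm_num)
  have habs : |(0.45:ℝ)| = 0.45 := by rw [abs_of_pos]; norm_num
  rw [habs] at h3
  have h5 := (abs_le.mp h3).2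
  have h4 : sin 0.45 ≤ 0.45 - 0.45^3/6 + 0.45^4 * (5/96) := by linarith
  calc sin (π/7) ≤ sin 0.45 := h2
    _ ≤ 0.43695 := by norm_num at h4 ⊢; linarith

lemma cos_two_pi_div_seven_gt : (0.618:ℝ) < cos (2*π/7) := by
  have h : (2:ℝ)*π/7 = 2*(π/7) := by ring
  rw [h, Real.cos_two_mul']
  have hs := sin_pi_div_seven_lt
  have hsnn : 0 ≤ sin (π/7) := by
    apply Real.sin_nonneg_of_nonneg_of_le_pi
    · positivity
    · have := Real.pi_pos; linarith
  rw [Real.cos_sq']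
  nlinarith

/-- The internal angle θ = arccos((1 + tanh²(r/2))/2) of an equilateral
hyperbolic triangle of side length r, for 0 < r ≤ 1, satisfies 2π/7 < θ < π/3. -/
theorem internal_angle_bounds (r : ℝ) (hr0 : 0 < r) (hr1 : r ≤ 1) :
    2 * π / 7 < arccos ((1 + tanh (r / 2) ^ 2) / 2) ∧
      arccos ((1 + tanh (r / 2) ^ 2) / 2) < π / 3 := by
  have hpi := Real.pi_pos
  set t := tanh (r/2) with ht
  -- bounds on t
  have htpos : 0 < t := by
    rw [ht, tanh_eq_aux]
    have : (1:ℝ) < exp (2*(r/2)) := by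
      rw [show 2*(r/2) = r by ring]
      exact Real.one_lt_exp_iff.mpr hr0
    apply div_pos <;> linarith
  have htle : t ≤ 0.4621172 := by
    have hmono : tanh (r/2) ≤ tanh (1/2) := by
      rw [tanh_eq_aux, tanh_eq_aux]
      have h1 : exp (2*(r/2)) ≤ exp (2*(1/2)) := by
        apply Real.exp_le_exp.mpr; linarith
      have h2 : (0:ℝ) < exp (2*(r/2)) := exp_pos _
      have h3 : (1:ℝ) < exp (2*(r/2)) := by
        rw [show 2*(r/2) = r by ring]; exact Real.one_lt_exp_iff.mpr hr0
      rw [div_le_div_iff₀ (by linarith) (by positivity)]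
      nlinarith [exp_pos (2*(1/2))]
    calc t ≤ tanh (1/2) := hmono
      _ ≤ 0.4621172 := tanh_half_bound.2
  set x := (1 + t^2)/2 with hx
  have hx1 : x ≤ 1 := by rw [hx]; nlinarith
  have hxhalf : 1/2 < x := by rw [hx]; nlinarith
  have hxub : x < 0.618 := by rw [hx]; nlinarith
  have hxmem : x ∈ Set.Icc (-1:ℝ) 1 := ⟨by linarith, hx1⟩
  constructor
  · -- lower bound
    have hc := cos_two_pi_div_seven_gt
    have h2p7 : 2*π/7 ≤ π := by linarith
    have heq : arccos (cos (2*π/7)) = 2*π/7 := Real.arccos_cos (by positivity) h2p7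
    have hcmem : cos (2*π/7) ∈ Set.Icc (-1:ℝ) 1 := ⟨Real.neg_one_le_cos _, Real.cos_le_one _⟩
    have := Real.strictAntiOn_arccos hxmem hcmem (by linarith : x < cos (2*π/7))
    rw [heq] at this
    linarith
  · -- upper bound
    have heq : arccos (cos (π/3)) = π/3 := Real.arccos_cos (by positivity) (by linarith)
    have hcos3 : cos (π/3) = 1/2 := Real.cos_pi_div_three
    have hmem2 : cos (π/3) ∈ Set.Icc (-1:ℝ) 1 := ⟨Real.neg_one_le_cos _, Real.cos_le_one _⟩
    have := Real.strictAntiOn_arccos hmem2 hxmem (by rw [hcos3]; linarith : cos (π/3) < x)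
    rw [heq] at this
    linarith
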